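/- Let ρ_∞ be Hermitian positive definite, ρ Hermitian, and G the solution of ρ_∞·G + G·ρ_∞ = ρ - ρ_∞. For a Lindblad generator with Hamiltonian H Hermitian and operators L_k, if ρ_∞ is an equilibrium (L(ρ_∞)=0) and ρ evolves by dρ/dt = L(ρ), then d/dt Tr(ρ_∞ G²) = -∑_k Tr([G,L_k]·ρ_∞·[G,L_k]†). In particular, Tr(ρ_∞G²) is nonincreasing along trajectories. -/

import Mathlib

open Matrix ComplexOrder

/-- Adjoint (Heisenberg-picture) pairing for the Lindblad generator:
`Tr(L(X) Y) = Tr(X L†(Y))`, written out explicitly. -/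
theorem lindblad_pair_aux {n m : ℕ} (H : Matrix (Fin n) (Fin n) ℂ)
    (L : Fin m → Matrix (Fin n) (Fin n) ℂ) (X Y : Matrix (Fin n) (Fin n) ℂ) :
    ((-Complex.I • (H * X - X * H) - (1/2:ℂ) • ∑ k, ((L k)ᴴ * L k * X + X * ((L k)ᴴ * L k)
        - (2:ℂ) • (L k * X * (L k)ᴴ))) * Y).trace
    = (X * (Complex.I • (H * Y - Y * H) - (1/2:ℂ) • ∑ k, ((L k)ᴴ * L k * Y + Y * ((L k)ᴴ * L k)
        - (2:ℂ) • ((L k)ᴴ * Y * L k)))).trace := by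
  simp only [Matrix.sub_mul, Matrix.mul_sub, Matrix.add_mul, Matrix.mul_add,
    smul_mul_assoc, mul_smul_comm, Finset.sum_mul, Finset.mul_sum,
    trace_sub, trace_add, trace_smul, trace_sum, smul_sub, smul_add]
  have hk : ∀ k ∈ (Finset.univ : Finset (Fin m)),
      ((X * ((L k)ᴴ * L k * Y)).trace + (X * (Y * ((L k)ᴴ * L k))).trace
        - (2:ℂ) • (X * ((L k)ᴴ * Y * L k)).trace)
      = (((L k)ᴴ * L k * X * Y).trace + (X * ((L k)ᴴ * L k) * Y).trace
        - (2:ℂ) • (L k * X * (L k)ᴴ * Y).trace) := by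
    intro k _
    have e1 : (X * (Y * ((L k)ᴴ * L k))).trace = ((L k)ᴴ * L k * X * Y).trace := by
      calc (X * (Y * ((L k)ᴴ * L k))).trace = ((X * Y) * ((L k)ᴴ * L k)).trace := by
            rw [Matrix.mul_assoc]
        _ = (((L k)ᴴ * L k) * (X * Y)).trace := trace_mul_comm _ _
        _ = _ := by simp only [Matrix.mul_assoc]
    have e2 : (X * ((L k)ᴴ * Y * L k)).trace = (L k * X * (L k)ᴴ * Y).trace := by
      calc (X * ((L k)ᴴ * Y * L k)).trace = ((X * ((L k)ᴴ * Y)) * L k).trace := by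
            simp only [Matrix.mul_assoc]
        _ = (L k * (X * ((L k)ᴴ * Y))).trace := trace_mul_comm _ _
        _ = _ := by simp only [Matrix.mul_assoc]
    have e3 : (X * ((L k)ᴴ * L k * Y)).trace = (X * ((L k)ᴴ * L k) * Y).trace := by
      simp only [Matrix.mul_assoc]
    rw [e1, e2, e3]; ring
  rw [Finset.sum_congr rfl hk]
  rw [show X * (Y * H) = X * Y * H from (Matrix.mul_assoc _ _ _).symm,
    trace_mul_cycle X Y H, show X * (H * Y) = X * H * Y from (Matrix.mul_assoc _ _ _).symm]
  simp only [smul_eq_mul]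
  ring

/-- The real part of the trace of a positive semidefinite matrix is nonnegative. -/
theorem posSemidef_trace_re_nonneg {n : ℕ} {A : Matrix (Fin n) (Fin n) ℂ}
    (hA : A.PosSemidef) : 0 ≤ A.trace.re := by
  have h : 0 ≤ A.trace := by
    rw [Matrix.trace]
    refine Finset.sum_nonneg fun i _ => ?_
    exact hA.diag_nonneg
  exact (Complex.le_def.mp h).1

/-- Algebraic form of `d/dt Tr(ρinf G²) = -∑ₖ Tr([G,Lₖ] ρinf [G,Lₖ]†)` along the
Lindblad flow, using the equilibrium condition `L(ρinf) = 0`. -/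
theorem lindblad_bures_derivative {n m : ℕ} (H : Matrix (Fin n) (Fin n) ℂ)
    (hH : H.IsHermitian) (L : Fin m → Matrix (Fin n) (Fin n) ℂ)
    (Lop : Matrix (Fin n) (Fin n) ℂ → Matrix (Fin n) (Fin n) ℂ)
    (hLop : ∀ σ, Lop σ = -Complex.I • (H * σ - σ * H)
      - (1/2 : ℂ) • ∑ k, ((L k)ᴴ * L k * σ + σ * ((L k)ᴴ * L k)
          - (2:ℂ) • (L k * σ * (L k)ᴴ)))
    (ρinf : Matrix (Fin n) (Fin n) ℂ) (hρinf : ρinf.PosDef) (heq : Lop ρinf = 0)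
    (δρ G : Matrix (Fin n) (Fin n) ℂ) (hδρ : δρ.IsHermitian) (hG : G.IsHermitian)
    (hLyap : ρinf * G + G * ρinf = δρ) :
    ((Lop δρ * G).trace).re
      = -∑ k, (((G * L k - L k * G) * ρinf * (G * L k - L k * G)ᴴ).trace).re ∧
    ((Lop δρ * G).trace).re ≤ 0 := by
  set DG : Matrix (Fin n) (Fin n) ℂ :=
    Complex.I • (H * G - G * H) - (1/2:ℂ) • ∑ k, ((L k)ᴴ * L k * G + G * ((L k)ᴴ * L k)
      - (2:ℂ) • ((L k)ᴴ * G * L k)) with hDG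
  have hAconj : ∀ k, (G * L k - L k * G)ᴴ = (L k)ᴴ * G - G * (L k)ᴴ := by
    intro k
    simp [conjTranspose_sub, conjTranspose_mul, hG.eq]
  have key : (Lop δρ * G).trace
      = -∑ k, ((G * L k - L k * G) * ρinf * (G * L k - L k * G)ᴴ).trace := by
    have h1 : (Lop δρ * G).trace = (δρ * DG).trace := by
      rw [hLop δρ, hDG]; exact lindblad_pair_aux H L δρ G
    have h2 : (δρ * DG).trace = (ρinf * (G * DG + DG * G)).trace := by
      rw [← hLyap, Matrix.add_mul, trace_add, Matrix.mul_assoc ρinf G DG,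
        Matrix.mul_assoc G ρinf DG, trace_mul_comm G (ρinf * DG),
        Matrix.mul_assoc ρinf DG G, Matrix.mul_add, trace_add]
    -- equilibrium: Tr(ρinf · L†(G²)) = 0
    have h0 : (ρinf * (Complex.I • (H * (G*G) - (G*G) * H)
        - (1/2:ℂ) • ∑ k, ((L k)ᴴ * L k * (G*G) + (G*G) * ((L k)ᴴ * L k)
          - (2:ℂ) • ((L k)ᴴ * (G*G) * L k)))).trace = 0 := by
      rw [← lindblad_pair_aux H L ρinf (G*G), ← hLop ρinf, heq, Matrix.zero_mul, trace_zero]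
    -- Hamiltonian part identity
    have hham : G * (Complex.I • (H * G - G * H)) + (Complex.I • (H * G - G * H)) * G
        = Complex.I • (H * (G*G) - (G*G) * H) := by
      simp only [Matrix.mul_sub, Matrix.sub_mul, mul_smul_comm, smul_mul_assoc,
        smul_sub, Matrix.mul_assoc]
      module
    -- per-k dissipation identity (matrix level)
    have hmat : ∀ k ∈ (Finset.univ : Finset (Fin m)),
        G * ((L k)ᴴ * L k * G + G * ((L k)ᴴ * L k) - (2:ℂ) • ((L k)ᴴ * G * L k))
          + ((L k)ᴴ * L k * G + G * ((L k)ᴴ * L k) - (2:ℂ) • ((L k)ᴴ * G * L k)) * G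
        = ((L k)ᴴ * L k * (G*G) + (G*G) * ((L k)ᴴ * L k) - (2:ℂ) • ((L k)ᴴ * (G*G) * L k))
          + (2:ℂ) • (((L k)ᴴ * G - G * (L k)ᴴ) * (G * L k - L k * G)) := by
      intro k _
      simp only [Matrix.mul_sub, Matrix.sub_mul, Matrix.mul_add, Matrix.add_mul,
        mul_smul_comm, smul_mul_assoc, smul_sub, smul_add, Matrix.mul_assoc]
      module
    -- full dissipation identity
    have hmatsum : G * DG + DG * G
        = (Complex.I • (H * (G*G) - (G*G) * H)
            - (1/2:ℂ) • ∑ k, ((L k)ᴴ * L k * (G*G) + (G*G) * ((L k)ᴴ * L k)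
              - (2:ℂ) • ((L k)ᴴ * (G*G) * L k)))
          - ∑ k, (((L k)ᴴ * G - G * (L k)ᴴ) * (G * L k - L k * G)) := by
      rw [hDG]
      have e : ∑ k : Fin m, (G * ((L k)ᴴ * L k * G + G * ((L k)ᴴ * L k)
            - (2:ℂ) • ((L k)ᴴ * G * L k))
          + ((L k)ᴴ * L k * G + G * ((L k)ᴴ * L k) - (2:ℂ) • ((L k)ᴴ * G * L k)) * G)
          = (∑ k, ((L k)ᴴ * L k * (G*G) + (G*G) * ((L k)ᴴ * L k)
              - (2:ℂ) • ((L k)ᴴ * (G*G) * L k)))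
            + (2:ℂ) • ∑ k, (((L k)ᴴ * G - G * (L k)ᴴ) * (G * L k - L k * G)) := by
        rw [Finset.sum_congr rfl hmat, Finset.sum_add_distrib, Finset.smul_sum]
      calc G * (Complex.I • (H * G - G * H) - (1/2:ℂ) • ∑ k, ((L k)ᴴ * L k * G
              + G * ((L k)ᴴ * L k) - (2:ℂ) • ((L k)ᴴ * G * L k)))
            + (Complex.I • (H * G - G * H) - (1/2:ℂ) • ∑ k, ((L k)ᴴ * L k * G
              + G * ((L k)ᴴ * L k) - (2:ℂ) • ((L k)ᴴ * G * L k))) * G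
          = (G * (Complex.I • (H * G - G * H)) + (Complex.I • (H * G - G * H)) * G)
            - (1/2:ℂ) • ∑ k : Fin m, (G * ((L k)ᴴ * L k * G + G * ((L k)ᴴ * L k)
              - (2:ℂ) • ((L k)ᴴ * G * L k))
            + ((L k)ᴴ * L k * G + G * ((L k)ᴴ * L k) - (2:ℂ) • ((L k)ᴴ * G * L k)) * G) := by
            simp only [Matrix.mul_sub, Matrix.sub_mul, mul_smul_comm, smul_mul_assoc,
              Finset.mul_sum, Finset.sum_mul, Finset.sum_add_distrib, smul_add, smul_sub]
            module
        _ = _ := by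
            rw [e, hham]
            module
    have hcyc : ∀ k ∈ (Finset.univ : Finset (Fin m)),
        (ρinf * (((L k)ᴴ * G - G * (L k)ᴴ) * (G * L k - L k * G))).trace
        = ((G * L k - L k * G) * ρinf * (G * L k - L k * G)ᴴ).trace := by
      intro k _
      rw [hAconj k, ← Matrix.mul_assoc,
        trace_mul_comm (ρinf * ((L k)ᴴ * G - G * (L k)ᴴ)) (G * L k - L k * G),
        ← Matrix.mul_assoc]
    rw [h1, h2, hmatsum, Matrix.mul_sub, trace_sub, h0, zero_sub, Finset.mul_sum,
      trace_sum, Finset.sum_congr rfl hcyc]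
  constructor
  · rw [key]
    simp [Complex.re_sum]
  · rw [key]
    simp only [Complex.neg_re, Complex.re_sum, neg_nonpos]
    refine Finset.sum_nonneg fun k _ => ?_
    exact posSemidef_trace_re_nonneg (hρinf.posSemidef.mul_mul_conjTranspose_same _)
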